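/- Let {N_α}_{α<k} be a k-small system on (X,G). Then N_∞ := ⋂_{α<k} N_α is a G-invariant ideal on X closed under unions of at most k sets. -/

import Mathlib

open Set Cardinal Pointwise

universe u

variable {X : Type u}

/-- A class of sets is `k`-additive if it is closed under unions of at most `k` of its members. -/
def KAdd (k : Cardinal.{u}) (C : Set (Set X)) : Prop :=
  ∀ 𝒜 : Set (Set X), 𝒜 ⊆ C → #𝒜 ≤ k → ⋃₀ 𝒜 ∈ C

/-- An ideal of subsets of `X`. -/
def IsIdeal (J : Set (Set X)) : Prop :=
  ∅ ∈ J ∧ (∀ A B : Set X, B ∈ J → A ⊆ B → A ∈ J) ∧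
    (∀ A B : Set X, A ∈ J → B ∈ J → A ∪ B ∈ J)

/-- An algebra of subsets of `X`. -/
def IsAlg (S : Set (Set X)) : Prop :=
  Set.univ ∈ S ∧ (∀ A ∈ S, Aᶜ ∈ S) ∧ (∀ A ∈ S, ∀ B ∈ S, A ∪ B ∈ S)

/-- A `G`-invariant class of sets. -/
def Invar (G : Type u) [Group G] [MulAction G X] (C : Set (Set X)) : Prop :=
  ∀ (g : G), ∀ A ∈ C, g • A ∈ C

/-- `N∞`: the intersection of the members of a `k`-small system. -/
def Ninf (k : Cardinal.{u}) (N : Ordinal.{u} → Set (Set X)) : Set (Set X) :=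
  {A | ∀ α < k.ord, A ∈ N α}

/-- A `k`-small system on `(X, G)` (Definition 2.6). -/
def IsSmallSystem (G : Type u) [Group G] [MulAction G X]
    (k : Cardinal.{u}) (N : Ordinal.{u} → Set (Set X)) : Prop :=
  (∀ α < k.ord, ∅ ∈ N α) ∧
  (∀ α < k.ord, Invar G (N α)) ∧
  (∀ α < k.ord, ∀ E ∈ N α, ∀ F, F ⊆ E → F ∈ N α) ∧
  (∀ α < k.ord, ∀ E ∈ N α, ∀ F ∈ Ninf k N, E ∪ F ∈ N α) ∧
  (∀ α < k.ord, ∃ αs, α < αs ∧ αs < k.ord ∧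
    ∀ E : Ordinal.{u} → Set X, (∀ β, αs < β → β < k.ord → E β ∈ N β) →
      (⋃ β ∈ {β | αs < β ∧ β < k.ord}, E β) ∈ N α) ∧
  (∀ α < k.ord, ∀ β < k.ord, ∃ γ < k.ord, α < γ ∧ β < γ ∧ N γ ⊆ N α ∧ N γ ⊆ N β)

/-- for a `k`-small system `{N_α}_{α<k}` on `(X,G)`, the class
`N∞ = ⋂_{α<k} N_α` is a `G`-invariant `k`-additive ideal on `X`. -/
theorem stmt_3 {G : Type u} [Group G] [MulAction G X]
    (k : Cardinal.{u}) (hk : ℵ₀ ≤ k) (N : Ordinal.{u} → Set (Set X))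
    (hN : IsSmallSystem G k N) :
    IsIdeal (Ninf k N) ∧ Invar G (Ninf k N) ∧ KAdd k (Ninf k N) := by
  obtain ⟨h1, h2, h3, h4, h5, h6⟩ := hN
  have hempty : (∅ : Set X) ∈ Ninf k N := fun α hα => h1 α hα
  refine ⟨⟨hempty, ?_, ?_⟩, ?_, ?_⟩
  · exact fun A B hB hAB α hα => h3 α hα B (hB α hα) A hAB
  · exact fun A B hA hB α hα => h4 α hα A (hA α hα) B hB
  · exact fun g A hA α hα => h2 α hα g A (hA α hα)
  · -- KAdd
    intro 𝒜 h𝒜 hcard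
    intro α hα
    obtain ⟨αs, hααs, hαs, hαsU⟩ := h5 α hα
    -- injection from 𝒜 into ordinals < k.ord
    have hmk : #𝒜 ≤ #(k.ord.ToType) := by
      rwa [Cardinal.mk_toType, Cardinal.card_ord]
    obtain ⟨f⟩ := hmk
    set ι : 𝒜 → Ordinal.{u} := fun a => αs + 1 + ((Ordinal.ToType.mk (o := k.ord)).symm (f a)).1
      with hι
    have hιmem : ∀ a : 𝒜, αs < ι a ∧ ι a < k.ord := by
      intro a
      constructor
      · calc αs < αs + 1 := lt_add_one αs
          _ ≤ ι a := le_self_add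
      · rw [Cardinal.lt_ord, Ordinal.card_add, Ordinal.card_add]
        have h1' : αs.card < k := (Cardinal.lt_ord).mp hαs
        have h2' : (((Ordinal.ToType.mk (o := k.ord)).symm (f a)).1).card < k :=
          (Cardinal.lt_ord).mp ((Ordinal.ToType.mk (o := k.ord)).symm (f a)).2
        have h3' : (1 : Ordinal).card < k := by
          simpa using lt_of_lt_of_le (by norm_num : (1:Cardinal) < ℵ₀) hk
        exact Cardinal.add_lt_of_lt hk (Cardinal.add_lt_of_lt hk h1' h3') h2'
    have hιinj : Function.Injective ι := by
      intro a b hab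
      have := (add_left_cancel_iff (a := αs+1)).mp hab
      have := Subtype.ext this
      have := (Ordinal.ToType.mk (o := k.ord)).symm.injective this
      exact f.injective this
    set E : Ordinal.{u} → Set X := fun β => ⋃ (a : 𝒜) (_ : ι a = β), (a : Set X) with hE
    have hEmem : ∀ β, E β ∈ Ninf k N := by
      intro β
      by_cases h : ∃ a : 𝒜, ι a = β
      · obtain ⟨a₀, ha₀⟩ := h
        have : E β = (a₀ : Set X) := by
          apply Set.Subset.antisymm
          · intro x hx
            simp only [hE, Set.mem_iUnion] at hx
            obtain ⟨a, ha, hxa⟩ := hx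
            have : a = a₀ := hιinj (ha.trans ha₀.symm)
            rwa [← this]
          · intro x hx
            simp only [hE, Set.mem_iUnion]
            exact ⟨a₀, ha₀, hx⟩
        rw [this]
        exact h𝒜 a₀.2
      · have : E β = ∅ := by
          simp only [hE, Set.eq_empty_iff_forall_notMem, Set.mem_iUnion]
          rintro x ⟨a, ha, -⟩
          exact h ⟨a, ha⟩
        rw [this]; exact hempty
    have hU : (⋃ β ∈ {β | αs < β ∧ β < k.ord}, E β) ∈ N α :=
      hαsU E (fun β hβ1 hβ2 => hEmem β β hβ2)
    refine h3 α hα _ hU _ ?_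
    intro x hx
    obtain ⟨A, hA, hxA⟩ := hx
    simp only [Set.mem_iUnion]
    refine ⟨ι ⟨A, hA⟩, ⟨(hιmem ⟨A, hA⟩).1, (hιmem ⟨A, hA⟩).2⟩, ?_⟩
    simp only [hE, Set.mem_iUnion]
    exact ⟨⟨A, hA⟩, rfl, hxA⟩
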